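/- Well-definedness of the Laver rank: let p₀ be a Laver tree with stem s₀ and D a dense subset of Laver forcing (ordered by ⊆). Define rank_D(p₀,s) for s ∈ p₀ with s ≥ s₀ by: rank_D(p₀,s) = 0 if there is a Laver tree q ⊆ p₀ with q ∈ D and stem s; otherwise rank_D(p₀,s) is the least ordinal α such that infinitely many immediate successors t of s lie in p₀ and satisfy rank_D(p₀,t) < α. Then rank_D(p₀,s) is a well-defined ordinal for every s ∈ p₀ with s ≥ s₀. -/

import Mathlib

/-- A tree on ω^{<ω}: a set of finite sequences closed under initial segments. -/
def IsTree (T : Set (List ℕ)) : Prop :=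
  ∀ s t : List ℕ, s <+: t → t ∈ T → s ∈ T

/-- `s` splits in `T`: at least two immediate successors of `s` lie in `T`. -/
def Splits (T : Set (List ℕ)) (s : List ℕ) : Prop :=
  ∃ n m : ℕ, n ≠ m ∧ s ++ [n] ∈ T ∧ s ++ [m] ∈ T

/-- Perfect (Sacks) tree: nonempty tree in which every node has a splitting extension. -/
def IsPerfect (T : Set (List ℕ)) : Prop :=
  IsTree T ∧ T.Nonempty ∧ ∀ s ∈ T, ∃ t ∈ T, s <+: t ∧ Splits T t

/-- Restriction of a tree at a node: T^{[s]} = {t ∈ T : t ≤ s or s ≤ t}. -/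
def restrictTree (T : Set (List ℕ)) (s : List ℕ) : Set (List ℕ) :=
  {t ∈ T | t <+: s ∨ s <+: t}

/-- A branch of `p`: an element of ω^ω all of whose finite initial segments lie in `p`. -/
def IsBranch (p : Set (List ℕ)) (x : ℕ → ℕ) : Prop :=
  ∀ k : ℕ, (List.range k).map x ∈ p

/-- A front of `p`: an antichain (w.r.t. the initial segment order) meeting every branch. -/
def IsFront (p F : Set (List ℕ)) : Prop :=
  F ⊆ p ∧ (∀ s ∈ F, ∀ t ∈ F, s <+: t → s = t) ∧
    ∀ x : ℕ → ℕ, IsBranch p x → ∃ k, (List.range k).map x ∈ F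

/-- The splitting nodes of `p`. -/
def spl (p : Set (List ℕ)) : Set (List ℕ) := {s ∈ p | Splits p s}

/-- The n-th splitting nodes of `p`: splitting nodes with exactly `n` proper initial
segments that are splitting nodes. -/
def splN (p : Set (List ℕ)) (n : ℕ) : Set (List ℕ) :=
  {s ∈ spl p | {t ∈ spl p | t <+: s ∧ t ≠ s}.ncard = n}

/-- A Laver tree with stem `s₀`: every node is comparable with `s₀`, and every node
extending `s₀` has infinitely many immediate successors in the tree. -/
def IsLaverWithStem (T : Set (List ℕ)) (s₀ : List ℕ) : Prop :=
  IsTree T ∧ s₀ ∈ T ∧ (∀ t ∈ T, t <+: s₀ ∨ s₀ <+: t) ∧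
    ∀ t ∈ T, s₀ <+: t → {n : ℕ | t ++ [n] ∈ T}.Infinite

def IsLaver (T : Set (List ℕ)) : Prop := ∃ s₀, IsLaverWithStem T s₀

/-- Superperfect (Miller) tree. -/
def IsSuperperfect (T : Set (List ℕ)) : Prop :=
  IsTree T ∧ T.Nonempty ∧
    (∀ s ∈ T, {n : ℕ | s ++ [n] ∈ T}.ncard = 1 ∨ {n : ℕ | s ++ [n] ∈ T}.Infinite) ∧
    ∀ s ∈ T, ∃ t ∈ T, s <+: t ∧ {n : ℕ | t ++ [n] ∈ T}.Infinite

/-- Rosłanowski tree. -/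
def IsRoslanowski (T : Set (List ℕ)) : Prop :=
  IsTree T ∧ T.Nonempty ∧
    (∀ s ∈ T, {n : ℕ | s ++ [n] ∈ T}.ncard = 1 ∨ ∀ n : ℕ, s ++ [n] ∈ T) ∧
    ∀ s ∈ T, ∃ t ∈ T, s <+: t ∧ ∀ n : ℕ, t ++ [n] ∈ T

noncomputable def laverW (B : List ℕ → Prop) (p₀ : Set (List ℕ)) : Ordinal → Set (List ℕ) :=
  WellFounded.fix Ordinal.lt_wf (fun α ih =>
    {s | B s ∨ {n : ℕ | s ++ [n] ∈ p₀ ∧ ∃ β : Ordinal, ∃ h : β < α, s ++ [n] ∈ ih β h}.Infinite})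

theorem mem_laverW {B : List ℕ → Prop} {p₀ : Set (List ℕ)} {α : Ordinal} {s : List ℕ} :
    s ∈ laverW B p₀ α ↔
      B s ∨ {n : ℕ | s ++ [n] ∈ p₀ ∧ ∃ β, β < α ∧ s ++ [n] ∈ laverW B p₀ β}.Infinite := by
  unfold laverW
  rw [WellFounded.fix_eq]
  simp only [Set.mem_setOf_eq, exists_prop]

/-- well-definedness of the Laver rank. For a Laver tree `p₀` with stem `s₀`
and a dense set `D` of Laver conditions there is an ordinal-valued rank function `r`
satisfying the defining recursion: `r s = 0` iff some Laver tree `q ⊆ p₀` with stem `s`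
lies in `D`; otherwise `r s` is the least ordinal `α` such that infinitely many immediate
successors `t` of `s` lie in `p₀` and satisfy `r t < α` (in particular such an `α` exists). -/
theorem laver_rank_wellDefined (p₀ : Set (List ℕ)) (s₀ : List ℕ)
    (hp₀ : IsLaverWithStem p₀ s₀) (D : Set (Set (List ℕ))) (hD : ∀ q ∈ D, IsLaver q)
    (hdense : ∀ p, IsLaver p → ∃ q ∈ D, q ⊆ p) :
    ∃ r : List ℕ → Ordinal,
      ∀ s ∈ p₀, s₀ <+: s →
        ((∃ q, q ∈ D ∧ q ⊆ p₀ ∧ IsLaverWithStem q s) → r s = 0) ∧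
        (¬ (∃ q, q ∈ D ∧ q ⊆ p₀ ∧ IsLaverWithStem q s) →
          {α : Ordinal | {n : ℕ | s ++ [n] ∈ p₀ ∧ r (s ++ [n]) < α}.Infinite}.Nonempty ∧
          r s = sInf {α : Ordinal | {n : ℕ | s ++ [n] ∈ p₀ ∧ r (s ++ [n]) < α}.Infinite}) := by
  classical
  set B : List ℕ → Prop := fun s => ∃ q, q ∈ D ∧ q ⊆ p₀ ∧ IsLaverWithStem q s with hBdef
  set r : List ℕ → Ordinal := fun s => sInf {α | s ∈ laverW B p₀ α} with hrdef
  -- B implies membership at level 0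
  have hW0 : ∀ s, B s → s ∈ laverW B p₀ 0 := fun s hs => mem_laverW.mpr (Or.inl hs)
  -- bad nodes have infinitely many bad successors
  have hbadsucc : ∀ s ∈ p₀, s₀ <+: s → ¬(∃ α, s ∈ laverW B p₀ α) →
      {n : ℕ | s ++ [n] ∈ p₀ ∧ ¬(∃ α, s ++ [n] ∈ laverW B p₀ α)}.Infinite := by
    intro s hs hss hbad
    by_contra hfin
    apply hbad
    rw [Set.not_infinite] at hfin
    have hG : {n : ℕ | s ++ [n] ∈ p₀ ∧ ∃ α, s ++ [n] ∈ laverW B p₀ α}.Infinite := by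
      refine Set.Infinite.mono ?_ ((hp₀.2.2.2 s hs hss).diff hfin)
      intro n hn
      rcases hn with ⟨h1, h2⟩
      simp only [Set.mem_setOf_eq, not_and, not_not] at h2
      exact ⟨h1, by_contra fun hc => hc (h2 h1)⟩
    set g : ℕ → Ordinal := fun n =>
      if h : ∃ α, s ++ [n] ∈ laverW B p₀ α then h.choose else 0 with hgdef
    refine ⟨(⨆ m, g m) + 1, mem_laverW.mpr (Or.inr (Set.Infinite.mono ?_ hG))⟩
    rintro n ⟨h1, h2⟩
    refine ⟨h1, g n, lt_of_le_of_lt (le_ciSup (Ordinal.bddAbove_range g) n) (lt_add_one _), ?_⟩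
    simp only [hgdef, dif_pos h2]
    exact h2.choose_spec
  -- totality
  have htotal : ∀ s ∈ p₀, s₀ <+: s → ∃ α, s ∈ laverW B p₀ α := by
    by_contra hcon
    push_neg at hcon
    obtain ⟨s', hs', hss', hbad'⟩ := hcon
    set q : Set (List ℕ) := {t | t ∈ p₀ ∧ (t <+: s' ∨
        (s' <+: t ∧ ∀ u, s' <+: u → u <+: t → ¬∃ α, u ∈ laverW B p₀ α))} with hqdef
    have hqsub : q ⊆ p₀ := fun t ht => ht.1
    -- every node of q extending s' is hereditarily bad
    have hhered : ∀ t ∈ q, s' <+: t → ∀ u, s' <+: u → u <+: t → ¬∃ α, u ∈ laverW B p₀ α := by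
      rintro t ⟨htp, hc⟩ hst u hsu hut
      rcases hc with h | h
      · have : t = s' := h.eq_of_length (le_antisymm h.length_le hst.length_le)
        subst this
        have : u = t := hut.eq_of_length (le_antisymm hut.length_le hsu.length_le)
        subst this
        exact fun ⟨α, hα⟩ => hbad' α hα
      · exact h.2 u hsu hut
    have hqL : IsLaverWithStem q s' := by
      refine ⟨?_, ⟨hs', Or.inl List.prefix_rfl⟩, fun t ht => ?_, ?_⟩
      · -- tree
        rintro a b hab ⟨hbp, hc⟩
        refine ⟨hp₀.1 a b hab hbp, ?_⟩
        rcases hc with h | h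
        · exact Or.inl (hab.trans h)
        · rcases List.prefix_or_prefix_of_prefix hab h.1 with h2 | h2
          · exact Or.inl h2
          · exact Or.inr ⟨h2, fun u hsu hua => h.2 u hsu (hua.trans hab)⟩
      · rcases ht.2 with h | h
        · exact Or.inl h
        · exact Or.inr h.1
      · -- infinitely many successors
        intro t ht hst
        have htbad : ¬∃ α, t ∈ laverW B p₀ α := hhered t ht hst t hst List.prefix_rfl
        have hinf := hbadsucc t ht.1 (hss'.trans hst) htbad
        refine Set.Infinite.mono ?_ hinf
        rintro n ⟨h1, h2⟩
        refine ⟨h1, Or.inr ⟨hst.trans (List.prefix_append t [n]), ?_⟩⟩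
        intro u hsu hut
        rcases List.prefix_concat_iff.mp hut with he | hp
        · subst he; exact h2
        · exact hhered t ht hst u hsu hp
    obtain ⟨q', hq'D, hq'sub⟩ := hdense q ⟨s', hqL⟩
    obtain ⟨s₁, hq'L⟩ := hD q' hq'D
    have hs₁q : s₁ ∈ q := hq'sub hq'L.2.1
    have hBstem : ∀ t, IsLaverWithStem q' t → B t :=
      fun t h => ⟨q', hq'D, fun x hx => hq'sub hx |>.1, h⟩
    rcases hs₁q.2 with h1 | h2
    · by_cases he : s₁ = s'
      · subst he
        exact hbad' 0 (hW0 s₁ (hBstem s₁ hq'L))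
      · -- s₁ proper prefix of s': at most one successor in q', contradiction
        have hlen : s₁.length < s'.length :=
          lt_of_le_of_ne h1.length_le (fun hl => he (h1.eq_of_length hl))
        have hone : ∀ n : ℕ, s₁ ++ [n] ∈ q' → s₁ ++ [n] <+: s' := by
          intro n hn
          have := (hq'sub hn).2
          rcases this with h | h
          · exact h
          · have hle : s'.length ≤ (s₁ ++ [n]).length := h.1.length_le
            simp only [List.length_append, List.length_singleton] at hle
            have : s' = s₁ ++ [n] := h.1.eq_of_length (by
              simp only [List.length_append, List.length_singleton]; omega)
            exact this ▸ List.prefix_rfl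
        obtain ⟨a, ha, b, hb, hab⟩ :=
          (hq'L.2.2.2 s₁ hq'L.2.1 List.prefix_rfl).nontrivial
        apply hab
        have hpa := hone a ha
        have hpb := hone b hb
        have : s₁ ++ [a] = s₁ ++ [b] := by
          rcases List.prefix_or_prefix_of_prefix hpa hpb with h | h
          · exact h.eq_of_length (by simp)
          · exact (h.eq_of_length (by simp)).symm
        simpa using this
    · exact h2.2 s₁ h2.1 List.prefix_rfl ⟨0, hW0 s₁ (hBstem s₁ hq'L)⟩
  -- membership at the rank
  have hmem : ∀ s ∈ p₀, s₀ <+: s → s ∈ laverW B p₀ (r s) :=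
    fun s hs h => csInf_mem (htotal s hs h)
  refine ⟨r, fun s hs hss => ⟨fun hBs => le_antisymm (csInf_le' (hW0 s hBs)) zero_le,
    fun hnB => ?_⟩⟩
  have h1 : {n : ℕ | s ++ [n] ∈ p₀ ∧ r (s ++ [n]) < r s}.Infinite := by
    have := mem_laverW.mp (hmem s hs hss)
    rcases this with h | h
    · exact absurd h hnB
    · refine Set.Infinite.mono ?_ h
      rintro n ⟨hn1, β, hβ, hnβ⟩
      exact ⟨hn1, lt_of_le_of_lt (csInf_le' hnβ) hβ⟩
  refine ⟨⟨r s, h1⟩, le_antisymm ?_ (csInf_le' h1)⟩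
  have h2 := csInf_mem (⟨r s, h1⟩ :
    {α : Ordinal | {n : ℕ | s ++ [n] ∈ p₀ ∧ r (s ++ [n]) < α}.Infinite}.Nonempty)
  refine csInf_le' (mem_laverW.mpr (Or.inr (Set.Infinite.mono ?_ h2)))
  rintro n ⟨hn1, hn2⟩
  exact ⟨hn1, r (s ++ [n]), hn2, hmem (s ++ [n]) hn1 (hss.trans (List.prefix_append s [n]))⟩
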